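/- Let a := 2 and let b ≥ 6 be an even integer. Let α := η and γ := (b−2)D/(2(1−D)) (the number whose α-expansion has periodic coefficient blocks (0, (b−2)/2)). Then γ ∉ ℤ+αℤ and 4(1−D)·M(α, γ) = η·(1−β)². -/

import Mathlib

open Filter

/-- Distance from a real number to the nearest integer. -/
noncomputable def distNearestInt (x : ℝ) : ℝ := |x - round x|

/-- Inhomogeneous approximation constant
`M(α,γ) = liminf_{n ∈ ℤ, |n| → ∞} |n| · ‖nα - γ‖`. -/
noncomputable def Mconst (α γ : ℝ) : ℝ :=
  Filter.liminf (fun n : ℤ => |(n : ℝ)| * distNearestInt (n * α - γ)) Filter.cofinite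

/-- `γ ∈ ℤ + αℤ`. -/
def inLattice (α γ : ℝ) : Prop := ∃ p q : ℤ, γ = (p : ℝ) + α * (q : ℝ)

/-- `η = [0; a,b,a,b,...]⁻ = (ab - √(a²b² - 4ab)) / (2a)`. -/
noncomputable def eta (a b : ℤ) : ℝ :=
  ((a : ℝ) * b - Real.sqrt (((a : ℝ) * b) ^ 2 - 4 * ((a : ℝ) * b))) / (2 * a)

/-- `β = [0; b,a,b,a,...]⁻ = (ab - √(a²b² - 4ab)) / (2b)`. -/
noncomputable def beta (a b : ℤ) : ℝ :=
  ((a : ℝ) * b - Real.sqrt (((a : ℝ) * b) ^ 2 - 4 * ((a : ℝ) * b))) / (2 * b)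

/-- `D = ηβ`. -/
noncomputable def Dconst (a b : ℤ) : ℝ := eta a b * beta a b

/-- The inhomogeneous Lagrange spectrum `L(α)` for `α = η`. -/
noncomputable def Lspec (a b : ℤ) : Set ℝ :=
  {m | ∃ γ : ℝ, ¬ inLattice (eta a b) γ ∧ m = Mconst (eta a b) γ}

/-- The normalized spectrum `L*(α) = {4(1-D)·M(α,γ) : γ ∉ ℤ + αℤ}` for `α = η`. -/
noncomputable def Lstar (a b : ℤ) : Set ℝ :=
  {m | ∃ γ : ℝ, ¬ inLattice (eta a b) γ ∧
    m = 4 * (1 - Dconst a b) * Mconst (eta a b) γ}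

/-- `v = (mβ - D)/(1 - D)`. -/
noncomputable def vconst (a b m : ℤ) : ℝ :=
  ((m : ℝ) * beta a b - Dconst a b) / (1 - Dconst a b)


lemma descent_aux (c : ℤ) (hc : 3 ≤ c) :
    ∀ n : ℕ, ∀ p u : ℤ, p.natAbs = n → Odd p → c - 1 ≤ |u ^ 2 - (c ^ 2 - c) * p ^ 2| := by
  intro n
  induction n using Nat.strong_induction_on with
  | _ n ih =>
    intro p u hpn hp
    by_contra hlt
    push_neg at hlt
    obtain ⟨ht1, ht2⟩ := abs_lt.mp hlt
    set P : ℤ := |p| with hPdef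
    set U : ℤ := |u| with hUdef
    have hPsq : P ^ 2 = p ^ 2 := sq_abs p
    have hUsq : U ^ 2 = u ^ 2 := sq_abs u
    have hPodd : Odd P := (odd_abs).mpr hp
    have hP0 : 0 ≤ P := abs_nonneg p
    have hU0 : 0 ≤ U := abs_nonneg u
    have hPn : P = (n : ℤ) := by
      rw [hPdef, Int.abs_eq_natAbs, hpn]
    have ht1' : -(c - 1) < U ^ 2 - (c ^ 2 - c) * P ^ 2 := by rw [hPsq, hUsq]; linarith
    have ht2' : U ^ 2 - (c ^ 2 - c) * P ^ 2 < c - 1 := by rw [hPsq, hUsq]; linarith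
    obtain ⟨s, hs⟩ := hPodd
    have hcase : P = 1 ∨ 3 ≤ P := by omega
    rcases hcase with h1 | h3
    · -- base case P = 1
      rw [h1] at ht1' ht2'
      have hU2u : U ^ 2 ≤ c ^ 2 - 2 := by linarith
      have hU2l : c ^ 2 - 2 * c + 2 ≤ U ^ 2 := by linarith
      have hUc : U ≤ c - 1 := by nlinarith
      have : U ^ 2 ≤ (c - 1) ^ 2 := by nlinarith
      nlinarith
    · -- descent step P ≥ 3
      have hP2 : 9 ≤ P ^ 2 := by nlinarith
      have key1 : (c - 1) * P < U := by
        by_contra hcon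
        push_neg at hcon
        have h1 : U ^ 2 ≤ ((c - 1) * P) ^ 2 := by
          have := pow_le_pow_left₀ hU0 hcon 2
          simpa using this
        nlinarith
      have key2 : U < c * P := by
        by_contra hcon
        push_neg at hcon
        have h1 : (c * P) ^ 2 ≤ U ^ 2 := by
          have hcp : 0 ≤ c * P := by positivity
          have := pow_le_pow_left₀ hcp hcon 2
          simpa using this
        nlinarith
      set p2 : ℤ := (2 * c - 1) * P - 2 * U with hp2def
      set u2 : ℤ := (2 * c - 1) * U - 2 * (c ^ 2 - c) * P with hu2def
      have hinv : u2 ^ 2 - (c ^ 2 - c) * p2 ^ 2 = U ^ 2 - (c ^ 2 - c) * P ^ 2 := by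
        rw [hp2def, hu2def]; ring
      have hodd2 : Odd p2 := ⟨(2 * c - 1) * s + c - 1 - U, by rw [hp2def, hs]; ring⟩
      have hp2a : p2 < P := by rw [hp2def]; linarith
      have hp2b : -P < p2 := by rw [hp2def]; linarith
      have habs : p2.natAbs < n := by omega
      have := ih p2.natAbs habs p2 u2 rfl hodd2
      rw [hinv] at this
      have := abs_lt.mp hlt
      have habs2 : |U ^ 2 - (c ^ 2 - c) * P ^ 2| < c - 1 := by
        rw [hUsq, hPsq]; exact hlt
      linarith [le_abs_self (U ^ 2 - (c ^ 2 - c) * P ^ 2),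
        neg_abs_le (U ^ 2 - (c ^ 2 - c) * P ^ 2)]

lemma key_quad (c p q : ℤ) (hc : 3 ≤ c) (hp : Odd p) :
    c - 1 ≤ |c * p ^ 2 - 2 * c * p * q + q ^ 2| := by
  have h : c * p ^ 2 - 2 * c * p * q + q ^ 2 = (q - c * p) ^ 2 - (c ^ 2 - c) * p ^ 2 := by ring
  rw [h]
  exact descent_aux c hc p.natAbs p (q - c * p) rfl hp


/-- Orbit of `(1,1)` under the automorph of the quadratic form `c p² - 2c pq + q²`. -/
def pseq (c : ℤ) : ℕ → ℤ × ℤ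
  | 0 => (1, 1)
  | k + 1 => ((4 * c - 1) * (pseq c k).1 - 2 * (pseq c k).2,
      2 * c * (pseq c k).1 - (pseq c k).2)

lemma pseq_inv (c : ℤ) (k : ℕ) :
    Odd (pseq c k).1 ∧ Odd (pseq c k).2 ∧
      c * (pseq c k).1 ^ 2 - 2 * c * (pseq c k).1 * (pseq c k).2 + (pseq c k).2 ^ 2 = 1 - c := by
  induction k with
  | zero => exact ⟨odd_one, odd_one, by simp [pseq]; ring⟩
  | succ k ih =>
    obtain ⟨⟨a, ha⟩, ⟨e, he⟩, h3⟩ := ih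
    refine ⟨⟨4 * c * a + 2 * c - a - 2 * e - 2, by simp only [pseq]; rw [ha, he]; ring⟩,
      ⟨2 * c * a + c - e - 1, by simp only [pseq]; rw [ha, he]; ring⟩, ?_⟩
    simp only [pseq]
    linear_combination h3

/-- Real facts about the orbit: with `δ_k = p_k α - q_k`, one has `-1 < δ_k < 0`,
`1 ≤ p_k` and `p_k < p_{k+1}`. -/
lemma pseq_real (c : ℤ) (hc : 3 ≤ c) (al : ℝ) (h1 : 1 / 2 < al) (h2 : al < 3 / 4)
    (hq : al ^ 2 = 2 * (c : ℝ) * al - (c : ℝ)) (k : ℕ) :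
    (-1 < ((pseq c k).1 : ℝ) * al - ((pseq c k).2 : ℝ) ∧
      ((pseq c k).1 : ℝ) * al - ((pseq c k).2 : ℝ) < 0) ∧
    (1 ≤ (pseq c k).1 ∧ (pseq c k).1 < (pseq c (k + 1)).1) := by
  have hc' : (3 : ℝ) ≤ (c : ℝ) := by exact_mod_cast hc
  have hrec : ∀ j : ℕ, ((pseq c (j + 1)).1 : ℝ) * al - ((pseq c (j + 1)).2 : ℝ)
      = (2 * al - 1) * (((pseq c j).1 : ℝ) * al - ((pseq c j).2 : ℝ)) := by
    intro j
    simp only [pseq]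
    push_cast
    linear_combination (-2 * ((pseq c j).1 : ℝ)) * hq
  induction k with
  | zero =>
    refine ⟨⟨by simp [pseq]; linarith, by simp [pseq]; linarith⟩, ?_⟩
    constructor
    · simp [pseq]
    · show (1 : ℤ) < (4 * c - 1) * 1 - 2 * 1
      omega
  | succ k ih =>
    obtain ⟨⟨hd1, hd2⟩, hp1, _⟩ := ih
    have hdrec := hrec k
    have hd1' : -1 < ((pseq c (k + 1)).1 : ℝ) * al - ((pseq c (k + 1)).2 : ℝ) := by
      rw [hdrec]; nlinarith
    have hd2' : ((pseq c (k + 1)).1 : ℝ) * al - ((pseq c (k + 1)).2 : ℝ) < 0 := by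
      rw [hdrec]; nlinarith
    refine ⟨⟨hd1', hd2'⟩, ?_, ?_⟩
    · -- 1 ≤ p_{k+1} : from real bound p_{k+1} > p_k
      have hgrow : ((pseq c k).1 : ℝ) < ((pseq c (k + 1)).1 : ℝ) := by
        show ((pseq c k).1 : ℝ) < (((4 * c - 1) * (pseq c k).1 - 2 * (pseq c k).2 : ℤ) : ℝ)
        push_cast
        have hpr : (1 : ℝ) ≤ ((pseq c k).1 : ℝ) := by exact_mod_cast hp1
        nlinarith
      have : (pseq c k).1 < (pseq c (k + 1)).1 := by exact_mod_cast hgrow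
      omega
    · -- p_{k+1} < p_{k+2}
      have hp1' : 1 ≤ (pseq c (k + 1)).1 := by
        have hgrow : ((pseq c k).1 : ℝ) < ((pseq c (k + 1)).1 : ℝ) := by
          show ((pseq c k).1 : ℝ) < (((4 * c - 1) * (pseq c k).1 - 2 * (pseq c k).2 : ℤ) : ℝ)
          push_cast
          have hpr : (1 : ℝ) ≤ ((pseq c k).1 : ℝ) := by exact_mod_cast hp1
          nlinarith
        have : (pseq c k).1 < (pseq c (k + 1)).1 := by exact_mod_cast hgrow
        omega
      have hgrow : ((pseq c (k + 1)).1 : ℝ) < ((pseq c (k + 2)).1 : ℝ) := by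
        show ((pseq c (k + 1)).1 : ℝ)
          < (((4 * c - 1) * (pseq c (k + 1)).1 - 2 * (pseq c (k + 1)).2 : ℤ) : ℝ)
        push_cast
        have hpr : (1 : ℝ) ≤ ((pseq c (k + 1)).1 : ℝ) := by exact_mod_cast hp1'
        nlinarith
      exact_mod_cast hgrow

set_option maxHeartbeats 2000000 in
theorem stmt18 (b : ℤ) (hb : 6 ≤ b) (hbe : Even b) :
    ¬ inLattice (eta 2 b)
        (((b : ℝ) - 2) * Dconst 2 b / (2 * (1 - Dconst 2 b))) ∧
    4 * (1 - Dconst 2 b) *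
        Mconst (eta 2 b) (((b : ℝ) - 2) * Dconst 2 b / (2 * (1 - Dconst 2 b))) =
      eta 2 b * (1 - beta 2 b) ^ 2 := by
  obtain ⟨c, hcb⟩ := hbe
  have hc3 : 3 ≤ c := by omega
  have hbc : b = 2 * c := by omega
  set C : ℝ := (c : ℝ) with hCdef
  have hCge : (3 : ℝ) ≤ C := by rw [hCdef]; exact_mod_cast hc3
  have hbR : (6 : ℝ) ≤ (b : ℝ) := by exact_mod_cast hb
  have hBC : (b : ℝ) = 2 * C := by rw [hCdef]; exact_mod_cast hbc
  set T : ℝ := Real.sqrt (4 * (b : ℝ) ^ 2 - 8 * (b : ℝ)) with hTdef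
  have hT2 : T ^ 2 = 4 * (b : ℝ) ^ 2 - 8 * (b : ℝ) := Real.sq_sqrt (by nlinarith)
  have hT0 : 0 ≤ T := Real.sqrt_nonneg _
  have hTub : T < 2 * (b : ℝ) - 2 := by nlinarith
  have hTlb : 2 * (b : ℝ) - 3 < T := by nlinarith
  have hT2C : T ^ 2 = 16 * C ^ 2 - 16 * C := by rw [hBC] at hT2; linarith
  have halpha : eta 2 b = (2 * (b : ℝ) - T) / 4 := by
    have harg : (((2 : ℤ) : ℝ) * (b : ℝ)) ^ 2 - 4 * (((2 : ℤ) : ℝ) * (b : ℝ))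
        = 4 * (b : ℝ) ^ 2 - 8 * (b : ℝ) := by push_cast; ring
    simp only [eta, harg, ← hTdef]
    push_cast; ring
  have hbeta : beta 2 b = (2 * (b : ℝ) - T) / (2 * (b : ℝ)) := by
    have harg : (((2 : ℤ) : ℝ) * (b : ℝ)) ^ 2 - 4 * (((2 : ℤ) : ℝ) * (b : ℝ))
        = 4 * (b : ℝ) ^ 2 - 8 * (b : ℝ) := by push_cast; ring
    simp only [beta, harg, ← hTdef]
    push_cast; ring
  set al : ℝ := eta 2 b with hal_def
  have hal : al = (2 * (b : ℝ) - T) / 4 := halpha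
  have hal1 : 1 / 2 < al := by rw [hal]; linarith
  have hal2 : al < 3 / 4 := by rw [hal]; linarith
  have hquad : al ^ 2 = 2 * C * al - C := by
    rw [hal, hBC]; linear_combination hT2C / 16
  have hTal : T = 4 * C - 4 * al := by rw [hal, hBC]; ring
  have hD : Dconst 2 b = 2 * al - 1 := by
    have hb0 : (b : ℝ) ≠ 0 := by linarith
    simp only [Dconst, ← hal_def]
    rw [hbeta, hal]
    field_simp
    linear_combination hT2
  have hG : ((b : ℝ) - 2) * Dconst 2 b / (2 * (1 - Dconst 2 b)) = (1 - al) / 2 := by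
    rw [hD]
    have h1 : (1 : ℝ) - (2 * al - 1) = 2 * (1 - al) := by ring
    have h2 : (1 : ℝ) - al ≠ 0 := by linarith
    have h4 : (2 : ℝ) * (1 - (2 * al - 1)) ≠ 0 := by intro h; apply h2; linarith
    rw [hBC, div_eq_div_iff h4 (by norm_num : (2:ℝ) ≠ 0)]
    linear_combination (-4 : ℝ) * hquad
  -- irrationality
  have hTirr : Irrational T := by
    apply irrational_nrt_of_notint_nrt 2 (4 * b ^ 2 - 8 * b)
    · rw [hT2]; push_cast; ring
    · rintro ⟨y, hy⟩
      have hy1 : (y : ℝ) < 2 * (b : ℝ) - 2 := hy ▸ hTub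
      have hy2 : 2 * (b : ℝ) - 3 < (y : ℝ) := hy ▸ hTlb
      have hz1 : y < 2 * b - 2 := by exact_mod_cast hy1
      have hz2 : 2 * b - 3 < y := by exact_mod_cast hy2
      omega
    · norm_num
  have halirr : Irrational al := by
    rw [hal]
    have h1 := (Irrational.intCast_sub hTirr (2 * b)).div_intCast (m := 4) (by norm_num)
    have heq : (2 * (b : ℝ) - T) / 4 = (((2 * b : ℤ) : ℝ) - T) / ((4 : ℤ) : ℝ) := by
      push_cast; ring
    rw [heq]
    exact h1
  have hnotin : ¬ inLattice al ((1 - al) / 2) := by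
    rintro ⟨p, q, hpq⟩
    have hq1 : ((2 * q + 1 : ℤ) : ℝ) ≠ 0 := by
      have : (2 * q + 1 : ℤ) ≠ 0 := by omega
      exact_mod_cast this
    have heq : al = (((1 - 2 * p : ℤ) : ℝ)) / (((2 * q + 1 : ℤ) : ℝ)) := by
      rw [eq_div_iff hq1]
      push_cast
      push_cast at hpq
      linear_combination (-2 : ℝ) * hpq
    have hirr2 : Irrational ((((1 - 2 * p : ℤ) : ℝ)) / (((2 * q + 1 : ℤ) : ℝ))) := heq ▸ halirr
    have h2 : ((((1 - 2 * p : ℤ) : ℝ)) / (((2 * q + 1 : ℤ) : ℝ)))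
        = (((1 - 2 * (p : ℚ)) / (2 * (q : ℚ) + 1) : ℚ) : ℝ) := by
      push_cast; ring
    rw [h2] at hirr2
    exact Rat.not_irrational _ hirr2
  -- the liminf value
  set L : ℝ := (C - 1) / (2 * T) with hLdef
  have hT9 : (9 : ℝ) ≤ T := by linarith
  have hL0 : 0 < L := by
    rw [hLdef]; apply div_pos <;> linarith
  set F : ℤ → ℝ := fun n => |(n : ℝ)| * distNearestInt ((n : ℝ) * al - (1 - al) / 2) with hF
  have hMF : Mconst al ((1 - al) / 2) = Filter.liminf F Filter.cofinite := rfl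
  have hFnonneg : ∀ n : ℤ, 0 ≤ F n := by
    intro n
    rw [hF]
    exact mul_nonneg (abs_nonneg _) (abs_nonneg _)
  clear_value T C al L F
  -- upper bound along the orbit
  have hkey_k : ∀ k : ℕ, F (((pseq c k).1 - 1) / 2) ≤ L := by
    intro k
    obtain ⟨hpodd, hqodd, hH⟩ := pseq_inv c k
    obtain ⟨⟨hd1, hd2⟩, hp1, _⟩ := pseq_real c hc3 al hal1 hal2 (by rw [← hCdef]; exact hquad) k
    set p : ℤ := (pseq c k).1
    set q : ℤ := (pseq c k).2
    clear_value p q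
    obtain ⟨nn, hnn⟩ := hpodd
    obtain ⟨mm, hmm⟩ := hqodd
    have hdiv : (p - 1) / 2 = nn := by omega
    rw [hdiv]
    have hnn0 : 0 ≤ nn := by omega
    have hpr : (1 : ℝ) ≤ (p : ℝ) := by exact_mod_cast hp1
    have hpnr : (p : ℝ) = 2 * (nn : ℝ) + 1 := by exact_mod_cast hnn
    -- the distance is at most the distance to mm
    have hstep : distNearestInt ((nn : ℝ) * al - (1 - al) / 2)
        ≤ |((nn : ℝ) * al - (1 - al) / 2) - (mm : ℝ)| := round_le _ mm
    have hqmr : (q : ℝ) = 2 * (mm : ℝ) + 1 := by exact_mod_cast hmm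
    have hdval : ((nn : ℝ) * al - (1 - al) / 2) - (mm : ℝ) = ((p : ℝ) * al - (q : ℝ)) / 2 := by
      rw [hpnr, hqmr]; ring
    -- the conjugate factor
    have hHr : C * (p : ℝ) ^ 2 - 2 * C * (p : ℝ) * (q : ℝ) + (q : ℝ) ^ 2 = 1 - C := by
      rw [hCdef]; exact_mod_cast hH
    have hprod : ((p : ℝ) * al - q) * ((p : ℝ) * (T / 2) + ((p : ℝ) * al - q)) = 1 - C := by
      rw [hTal]
      linear_combination hHr - (p : ℝ) ^ 2 * hquad
    have hpt : 0 ≤ ((p : ℝ) - 1) * (T / 2) := mul_nonneg (by linarith) (by linarith)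
    have he_pos : 0 < (p : ℝ) * (T / 2) + ((p : ℝ) * al - q) := by nlinarith only [hpt, hd1, hT9]
    -- assemble
    simp only [hF]
    have habs : |(nn : ℝ)| = (nn : ℝ) := abs_of_nonneg (by exact_mod_cast hnn0)
    rw [habs]
    have hb1 : (nn : ℝ) * distNearestInt ((nn : ℝ) * al - (1 - al) / 2)
        ≤ (nn : ℝ) * |((p : ℝ) * al - (q : ℝ)) / 2| := by
      apply mul_le_mul_of_nonneg_left _ (by exact_mod_cast hnn0)
      rw [← hdval]
      exact hstep
    have habs2 : |((p : ℝ) * al - (q : ℝ)) / 2| = -((p : ℝ) * al - (q : ℝ)) / 2 := by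
      rw [abs_div]
      rw [abs_of_neg hd2]
      norm_num
    refine le_trans hb1 ?_
    rw [habs2, hLdef]
    rw [le_div_iff₀ (show (0:ℝ) < 2*T by linarith)]
    have hnnp : (nn : ℝ) = ((p : ℝ) - 1) / 2 := by linarith
    rw [hnnp]
    -- (nn * (-δ)) * (2T) ≤ (C-1) * 2 ; use (C-1) = (-δ)*e
    nlinarith only [hprod, hd1, hd2, hT9, hpr,
      mul_pos (neg_pos.mpr hd2) (show (0:ℝ) < T / 2 + ((p : ℝ) * al - q) by nlinarith only [hd1, hT9]),
      mul_pos (neg_pos.mpr hd2) he_pos]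
  -- infinitely many good n
  have hmono : StrictMono (fun k : ℕ => ((pseq c k).1 - 1) / 2) := by
    apply strictMono_nat_of_lt_succ
    intro k
    obtain ⟨hpodd, _, _⟩ := pseq_inv c k
    obtain ⟨hpodd', _, _⟩ := pseq_inv c (k + 1)
    obtain ⟨_, hp1, hplt⟩ := pseq_real c hc3 al hal1 hal2 (by rw [← hCdef]; exact hquad) k
    obtain ⟨a1, ha1⟩ := hpodd
    obtain ⟨a2, ha2⟩ := hpodd'
    omega
  have hsetinf : {n : ℤ | F n ≤ L}.Infinite := by
    apply Set.infinite_of_injective_forall_mem (f := fun k : ℕ => ((pseq c k).1 - 1) / 2)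
      hmono.injective
    intro k
    exact hkey_k k
  have hfreq : ∃ᶠ n in Filter.cofinite, F n ≤ L :=
    Filter.frequently_cofinite_iff_infinite.mpr hsetinf
  have hbddF : Filter.IsBoundedUnder (· ≥ ·) Filter.cofinite F :=
    ⟨0, by
      rw [Filter.eventually_map]
      exact Filter.Eventually.of_forall hFnonneg⟩
  have hupper : Mconst al ((1 - al) / 2) ≤ L := by
    rw [hMF]
    exact Filter.liminf_le_of_frequently_le hfreq hbddF
  -- lower bound
  have hkey_low : ∀ x : ℝ, 0 < x → x < L → {n : ℤ | F n < x}.Finite := by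
    intro x hx0 hxL
    have heps : 0 < C - 1 - 2 * x * T := by
      have h1 : x * (2 * T) < C - 1 := by
        rw [hLdef] at hxL
        exact (lt_div_iff₀ (show (0:ℝ) < 2*T by linarith)).mp hxL
      nlinarith only [h1]
    set R : ℝ := max 1 ((4 * x ^ 2 + x * T) / (C - 1 - 2 * x * T)) with hR
    apply Set.Finite.subset (Set.finite_Icc (-(⌈R⌉ + 1)) (⌈R⌉ + 1) : Set.Finite (Set.Icc (-(⌈R⌉+1)) (⌈R⌉+1) : Set ℤ))
    intro n hn
    simp only [Set.mem_setOf_eq] at hn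
    simp only [Set.mem_Icc]
    by_contra hcon
    push_neg at hcon
    have hnR : R < |(n : ℝ)| := by
      have hRceil : R ≤ (⌈R⌉ : ℝ) := Int.le_ceil R
      rcases le_or_gt n (⌈R⌉ + 1) with h | h
      · have h2 : n < -(⌈R⌉ + 1) := by
          rcases lt_or_ge n (-(⌈R⌉ + 1)) with h3 | h3
          · exact h3
          · exact absurd (hcon h3) (not_lt.mpr h)
        have h4 : ((⌈R⌉ : ℝ) + 1) < -(n : ℝ) := by
          have : (⌈R⌉ + 1 : ℤ) < -n := by omega
          exact_mod_cast this
        have : (⌈R⌉ : ℝ) + 1 < |(n : ℝ)| := lt_of_lt_of_le h4 (neg_le_abs _)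
        linarith
      · have h4 : ((⌈R⌉ : ℝ) + 1) < (n : ℝ) := by exact_mod_cast h
        have : (⌈R⌉ : ℝ) + 1 < |(n : ℝ)| := lt_of_lt_of_le h4 (le_abs_self _)
        linarith
    have hnn1 : (1 : ℝ) ≤ |(n : ℝ)| := le_trans (le_max_left _ _) (le_of_lt hnR)
    -- extract the quadratic form bound
    set m : ℤ := round ((n : ℝ) * al - (1 - al) / 2) with hm
    set dd : ℝ := |((n : ℝ) * al - (1 - al) / 2) - (m : ℝ)| with hdd
    have hdd0 : 0 ≤ dd := abs_nonneg _
    have hFn : |(n : ℝ)| * dd < x := by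
      have : F n = |(n : ℝ)| * dd := by rw [hF, hdd, hm]; rfl
      rw [← this]; exact hn
    have hppodd : Odd (2 * n + 1) := ⟨n, by ring⟩
    have hHlbZ := key_quad c (2 * n + 1) (2 * m + 1) hc3 hppodd
    have hHlb : C - 1 ≤ |C * (2 * (n : ℝ) + 1) ^ 2
        - 2 * C * (2 * (n : ℝ) + 1) * (2 * (m : ℝ) + 1) + (2 * (m : ℝ) + 1) ^ 2| := by
      rw [hCdef]
      exact_mod_cast hHlbZ
    -- factor the form
    have habs_eq : |(2 * (n : ℝ) + 1) * al - (2 * (m : ℝ) + 1)| = 2 * dd := by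
      have h1 : (2 * (n : ℝ) + 1) * al - (2 * (m : ℝ) + 1)
          = 2 * (((n : ℝ) * al - (1 - al) / 2) - (m : ℝ)) := by ring
      rw [h1, abs_mul, hdd]
      norm_num
    have hfact : C * (2 * (n : ℝ) + 1) ^ 2
        - 2 * C * (2 * (n : ℝ) + 1) * (2 * (m : ℝ) + 1) + (2 * (m : ℝ) + 1) ^ 2
        = ((2 * (n : ℝ) + 1) * al - (2 * (m : ℝ) + 1))
          * ((2 * (n : ℝ) + 1) * (T / 2) + ((2 * (n : ℝ) + 1) * al - (2 * (m : ℝ) + 1))) := by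
      rw [hTal]
      linear_combination (2 * (n : ℝ) + 1) ^ 2 * hquad
    have hEbound : |(2 * (n : ℝ) + 1) * (T / 2) + ((2 * (n : ℝ) + 1) * al - (2 * (m : ℝ) + 1))|
        ≤ (2 * |(n : ℝ)| + 1) * (T / 2) + 2 * dd := by
      refine le_trans (abs_add_le _ _) ?_
      rw [habs_eq]
      have h2 : |(2 * (n : ℝ) + 1) * (T / 2)| = |2 * (n : ℝ) + 1| * (T / 2) := by
        rw [abs_mul, abs_of_nonneg (by linarith : (0:ℝ) ≤ T / 2)]
      rw [h2]
      have h3 : |2 * (n : ℝ) + 1| ≤ 2 * |(n : ℝ)| + 1 := by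
        refine le_trans (abs_add_le _ _) ?_
        rw [abs_mul]
        norm_num
      have h4 : |2 * (n : ℝ) + 1| * (T / 2) ≤ (2 * |(n : ℝ)| + 1) * (T / 2) :=
        mul_le_mul_of_nonneg_right h3 (by linarith)
      linarith
    have hmain : C - 1 ≤ 2 * dd * ((2 * |(n : ℝ)| + 1) * (T / 2) + 2 * dd) := by
      calc C - 1 ≤ |C * (2 * (n : ℝ) + 1) ^ 2
          - 2 * C * (2 * (n : ℝ) + 1) * (2 * (m : ℝ) + 1) + (2 * (m : ℝ) + 1) ^ 2| := hHlb
        _ = |(2 * (n : ℝ) + 1) * al - (2 * (m : ℝ) + 1)|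
            * |(2 * (n : ℝ) + 1) * (T / 2) + ((2 * (n : ℝ) + 1) * al - (2 * (m : ℝ) + 1))| := by
          rw [hfact, abs_mul]
        _ = 2 * dd * |(2 * (n : ℝ) + 1) * (T / 2) + ((2 * (n : ℝ) + 1) * al - (2 * (m : ℝ) + 1))| := by
          rw [habs_eq]
        _ ≤ 2 * dd * ((2 * |(n : ℝ)| + 1) * (T / 2) + 2 * dd) :=
          mul_le_mul_of_nonneg_left hEbound (by linarith)
    -- derive the contradiction
    set nr : ℝ := |(n : ℝ)| with hnr
    have hnr0 : 0 < nr := lt_of_lt_of_le one_pos hnn1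
    have h1 : dd * nr < x := by rw [mul_comm]; exact hFn
    have h2 : (dd * nr) ^ 2 < x ^ 2 := by nlinarith only [h1, hx0, mul_nonneg hdd0 (le_of_lt hnr0)]
    have h3 := mul_le_mul_of_nonneg_right hmain (sq_nonneg nr)
    have hstep1 : (C - 1) * nr ^ 2 ≤ (dd * nr) * ((2 * nr + 1) * nr) * T + 4 * (dd * nr) ^ 2 := by
      nlinarith only [h3]
    have hpos2 : (0:ℝ) < (2 * nr + 1) * nr * T := by positivity
    have hstep2 : (dd * nr) * ((2 * nr + 1) * nr) * T ≤ x * ((2 * nr + 1) * nr) * T := by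
      nlinarith only [mul_le_mul_of_nonneg_right (le_of_lt h1) (le_of_lt hpos2)]
    have hstep4 : (C - 1) * nr ^ 2 ≤ x * (2 * nr + 1) * nr * T + 4 * x ^ 2 := by nlinarith only [hstep1, hstep2, h2]
    have hstep5 : (C - 1 - 2 * x * T) * nr ^ 2 ≤ x * T * nr + 4 * x ^ 2 := by nlinarith only [hstep4]
    have hstep6 : x * T * nr + 4 * x ^ 2 ≤ (x * T + 4 * x ^ 2) * nr := by
      nlinarith only [mul_nonneg (mul_nonneg (le_of_lt hx0) (le_of_lt hx0)) (show (0:ℝ) ≤ nr - 1 by linarith)]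
    have hstep7 : (C - 1 - 2 * x * T) * nr ≤ x * T + 4 * x ^ 2 := by
      have hcomb : ((C - 1 - 2 * x * T) * nr) * nr ≤ ((x * T + 4 * x ^ 2)) * nr := by
        nlinarith only [hstep5, hstep6]
      exact le_of_mul_le_mul_right hcomb hnr0
    have hstep8 : (4 * x ^ 2 + x * T) / (C - 1 - 2 * x * T) < nr :=
      lt_of_le_of_lt (le_trans (le_max_right _ _) (le_refl R)) hnR
    have hstep9 : 4 * x ^ 2 + x * T < (C - 1 - 2 * x * T) * nr := by
      rw [div_lt_iff₀ heps] at hstep8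
      linarith
    linarith
  have hlow : ∀ x : ℝ, x < L → ∀ᶠ n in Filter.cofinite, x ≤ F n := by
    intro x hxL
    rcases le_or_gt x 0 with h | h
    · exact Filter.Eventually.of_forall fun n => le_trans h (hFnonneg n)
    · have hfin := hkey_low x h hxL
      rw [Filter.eventually_cofinite]
      refine Set.Finite.subset hfin ?_
      intro n hn
      simp only [Set.mem_setOf_eq] at hn ⊢
      linarith [not_le.mp hn]
  have hcob : Filter.IsCoboundedUnder (· ≥ ·) Filter.cofinite F :=
    Filter.IsCoboundedUnder.of_frequently_le hfreq
  have hlower : L ≤ Mconst al ((1 - al) / 2) := by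
    rw [hMF]
    refine le_of_forall_lt fun y hy => ?_
    have h1 : (y + L) / 2 ≤ Filter.liminf F Filter.cofinite :=
      Filter.le_liminf_of_le hcob (hlow ((y + L) / 2) (by linarith))
    linarith
  have hM : Mconst al ((1 - al) / 2) = L := le_antisymm hupper hlower
  -- final algebraic identity
  have hbeta2 : 1 - beta 2 b = T / (4 * C) := by
    have hC4 : (4 * C : ℝ) ≠ 0 := ne_of_gt (by linarith)
    rw [hbeta, hBC, eq_div_iff hC4]
    have h44 : (2 * (2 * C) : ℝ) = 4 * C := by ring
    rw [h44, sub_mul, one_mul, div_mul_cancel₀ _ hC4]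
    ring
  refine ⟨by rw [hG]; exact hnotin, ?_⟩
  rw [hG, hM, hD, hbeta2, hLdef]
  have hT0' : T ≠ 0 := by linarith
  have hC0 : C ≠ 0 := by linarith
  rw [hTal]
  have h4ne : (4 * C - 4 * al : ℝ) ≠ 0 := ne_of_gt (show (0:ℝ) < 4 * C - 4 * al by linarith)
  field_simp
  rw [div_eq_iff (show (C - al : ℝ) ≠ 0 by linarith)]
  linear_combination (2 * (C ^ 2 - C - al * C + al ^ 2)) * hquad
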